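/- (Composing characterization) Under the hypotheses of the composing/decomposing theorem, for a tuple (x_1,…,x_m) ∈ S with rule {x_j : j ∈ W_i} →_p x_i (all values in S_∞), the rule is composing with respect to the ordering ≺_p if and only if i ∈ C. -/
import Mathlib


variable {V : Type*} {m : ℕ}

def ImS (S : Set (Fin m → V)) (C : Set (Fin m)) : Set V :=
  {v | ∃ i ∈ C, ∃ x ∈ S, x i = v}

def Stage (S : Set (Fin m → V)) (C : Set (Fin m)) (W : Fin m → Set (Fin m)) :
    ℕ → Set V
  | 0 => (ImS S C)ᶜ
  | n + 1 => Stage S C W n ∪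
      {v | ∃ i ∈ C, ∃ x ∈ S, x i = v ∧ ∀ j ∈ W i, x j ∈ Stage S C W n}

def SInf (S : Set (Fin m → V)) (C : Set (Fin m)) (W : Fin m → Set (Fin m)) : Set V :=
  ⋃ n, Stage S C W n

/-- The stage ordering: `v ≺ w` iff the first stage containing `v` strictly precedes
the first stage containing `w`. -/
def precS (S : Set (Fin m → V)) (C : Set (Fin m)) (W : Fin m → Set (Fin m))
    (v w : V) : Prop :=
  ∃ a b : ℕ, a < b ∧
    v ∈ Stage S C W a ∧ (∀ k < a, v ∉ Stage S C W k) ∧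
    w ∈ Stage S C W b ∧ (∀ k < b, w ∉ Stage S C W k)

lemma stage_succ (S : Set (Fin m → V)) (C : Set (Fin m)) (W : Fin m → Set (Fin m))
    (n : ℕ) : Stage S C W (n + 1) = Stage S C W n ∪
      {v | ∃ i ∈ C, ∃ x ∈ S, x i = v ∧ ∀ j ∈ W i, x j ∈ Stage S C W n} := rfl

theorem composing_characterization
    (S : Set (Fin m → V)) (C D : Set (Fin m)) (W : Fin m → Set (Fin m))
    (hLCF1 : ∀ i ∈ D, ∃ h ∈ C, h ∈ W i ∧ i ∈ W h)
    (hLCF2 : ∀ i ∈ C, ∀ t ∈ C, ∀ x ∈ S, ∀ y ∈ S,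
      x i = y t → x '' (W i) = y '' (W t))
    (hCD : Disjoint C D)
    (i : Fin m) (hi : i ∈ C ∪ D) (x : Fin m → V) (hx : x ∈ S)
    (hxi : x i ∈ SInf S C W) (hW : ∀ j ∈ W i, x j ∈ SInf S C W) :
    (∀ j ∈ W i, precS S C W (x j) (x i)) ↔ i ∈ C := by
  constructor
  · intro hcomp
    rcases hi with hiC | hiD
    · exact hiC
    exfalso
    obtain ⟨h, hhC, hhWi, hiWh⟩ := hLCF1 i hiD
    obtain ⟨a, b, hab, hva, hmina, hvb, hminb⟩ := hcomp h hhWi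
    have hIm : x h ∈ ImS S C := ⟨h, hhC, x, hx, rfl⟩
    match a, hva, hmina, hab with
    | 0, hva, _, _ => exact hva hIm
    | a + 1, hva, hmina, hab =>
      have hnot : x h ∉ Stage S C W a := hmina a (Nat.lt_succ_self a)
      rw [stage_succ] at hva
      rcases hva with h1 | ⟨t, htC, y, hy, hyt, hally⟩
      · exact hnot h1
      have himg := hLCF2 h hhC t htC x hx y hy hyt.symm
      have hxi' : x i ∈ y '' (W t) := himg ▸ ⟨i, hiWh, rfl⟩
      obtain ⟨j, hj, hji⟩ := hxi'
      have : x i ∈ Stage S C W a := hji ▸ hally j hj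
      exact hminb a (lt_trans (Nat.lt_succ_self a) hab) this
  · intro hiC j hj
    classical
    have hxiIm : x i ∈ ImS S C := ⟨i, hiC, x, hx, rfl⟩
    have exb : ∃ n, x i ∈ Stage S C W n := Set.mem_iUnion.mp hxi
    have exa : ∃ n, x j ∈ Stage S C W n := Set.mem_iUnion.mp (hW j hj)
    have hb := Nat.find_spec exb
    have hpos : Nat.find exb ≠ 0 := fun h0 => (h0 ▸ hb) hxiIm
    obtain ⟨c, hc⟩ := Nat.exists_eq_succ_of_ne_zero hpos
    have hminb : ∀ k < c + 1, x i ∉ Stage S C W k :=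
      fun k hk => Nat.find_min exb (hc.symm ▸ hk)
    rw [hc] at hb
    have hb' := hb
    rw [stage_succ] at hb
    have hnot : x i ∉ Stage S C W c := hminb c (Nat.lt_succ_self c)
    rcases hb with h1 | ⟨t, htC, y, hy, hyt, hally⟩
    · exact absurd h1 hnot
    have himg := hLCF2 i hiC t htC x hx y hy hyt.symm
    have hxj' : x j ∈ y '' (W t) := himg ▸ ⟨j, hj, rfl⟩
    obtain ⟨k, hk, hkj⟩ := hxj'
    have hjc : x j ∈ Stage S C W c := hkj ▸ hally k hk
    refine ⟨Nat.find exa, c + 1, ?_, Nat.find_spec exa,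
      fun k hk => Nat.find_min exa hk, hb', hminb⟩
    exact lt_of_le_of_lt (Nat.find_le hjc) (Nat.lt_succ_self c)
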